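/- Let $E$ be a Banach space and let $H_0[E]$ denote the space of positively homogeneous functions $f:E^*\to\mathbb{R}$ with $\|f\|_{FBL[E]}:=\sup\{\sum_{i=1}^n |f(x_i^*)| : n\in\mathbb{N},\ x_1^*,\dots,x_n^*\in E^*,\ \sup_{x\in B_E}\sum_{i=1}^n|x_i^*(x)|\le 1\}<\infty$. Then $\|\cdot\|_{FBL[E]}$ is a norm on $H_0[E]$, and for each $x\in E$ the evaluation map $\delta_E(x): E^*\to\mathbb{R}$, $x^*\mapsto x^*(x)$, belongs to $H_0[E]$ with $\|\delta_E(x)\|_{FBL[E]}=\|x\|_E$; that is, $\delta_E: E\to H_0[E]$ is a linear isometry. -/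

import Mathlib

open Finset Pointwise

variable {E : Type*} [NormedAddCommGroup E] [NormedSpace ℝ E]

/-- `f : E* → ℝ` is positively homogeneous. -/
def PositivelyHomogeneous (f : (E →L[ℝ] ℝ) → ℝ) : Prop :=
  ∀ (c : ℝ), 0 < c → ∀ xstar : E →L[ℝ] ℝ, f (c • xstar) = c * f xstar

/-- The set of sums `∑ i |f(x_i^*)|` over finite families with
`sup_{x ∈ B_E} ∑ i |x_i^*(x)| ≤ 1`, whose supremum is the `FBL[E]`-norm of `f`. -/
def fblNormSet (f : (E →L[ℝ] ℝ) → ℝ) : Set ℝ :=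
  {s : ℝ | ∃ (n : ℕ) (xstar : Fin n → E →L[ℝ] ℝ),
    (∀ x : E, ‖x‖ ≤ 1 → ∑ i, |xstar i x| ≤ 1) ∧ s = ∑ i, |f (xstar i)|}

/-- `H₀[E]`: positively homogeneous functions with finite `FBL[E]`-norm. -/
def memH0 (f : (E →L[ℝ] ℝ) → ℝ) : Prop :=
  PositivelyHomogeneous f ∧ BddAbove (fblNormSet f)

/-- The `FBL[E]`-norm. -/
noncomputable def fblNorm (f : (E →L[ℝ] ℝ) → ℝ) : ℝ := sSup (fblNormSet f)

lemma zero_mem_fblNormSet (f : (E →L[ℝ] ℝ) → ℝ) : (0:ℝ) ∈ fblNormSet f :=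
  ⟨0, fun _ => 0, by simp, by simp⟩

lemma fblNormSet_nonempty (f : (E →L[ℝ] ℝ) → ℝ) : (fblNormSet f).Nonempty :=
  ⟨0, zero_mem_fblNormSet f⟩

lemma fblNorm_nonneg' (f : (E →L[ℝ] ℝ) → ℝ) (hf : BddAbove (fblNormSet f)) :
    0 ≤ fblNorm f := le_csSup hf (zero_mem_fblNormSet f)

/-- Elements of the set are bounded by fblNorm when bdd above. -/
lemma le_fblNorm {f : (E →L[ℝ] ℝ) → ℝ} (hf : BddAbove (fblNormSet f))
    {s : ℝ} (hs : s ∈ fblNormSet f) : s ≤ fblNorm f := le_csSup hf hs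

/-- δ bound: admissible families evaluate at x within ‖x‖. -/
lemma delta_sum_le {n : ℕ} (xstar : Fin n → E →L[ℝ] ℝ)
    (h : ∀ x : E, ‖x‖ ≤ 1 → ∑ i, |xstar i x| ≤ 1) (x : E) :
    ∑ i, |xstar i x| ≤ ‖x‖ := by
  rcases eq_or_ne x 0 with rfl | hx
  · simp
  · have hnx : (0:ℝ) < ‖x‖ := norm_pos_iff.mpr hx
    have hz : ‖(‖x‖⁻¹ • x)‖ ≤ 1 := by
      rw [norm_smul, norm_inv, norm_norm]
      exact le_of_eq (inv_mul_cancel₀ hnx.ne')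
    have := h _ hz
    have heq : ∀ i, |xstar i (‖x‖⁻¹ • x)| = ‖x‖⁻¹ * |xstar i x| := by
      intro i
      rw [map_smul, smul_eq_mul, abs_mul, abs_inv, abs_norm]
    rw [Finset.sum_congr rfl (fun i _ => heq i), ← Finset.mul_sum] at this
    calc ∑ i, |xstar i x| = ‖x‖ * (‖x‖⁻¹ * ∑ i, |xstar i x|) := by
          field_simp
      _ ≤ ‖x‖ * 1 := by exact mul_le_mul_of_nonneg_left this hnx.le
      _ = ‖x‖ := mul_one _


/-- `‖·‖_{FBL[E]}` is a norm on `H₀[E]`, and `δ_E : E → H₀[E]`, sending `x` to the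
evaluation `x* ↦ x*(x)`, is a linear isometry. -/
theorem fblNorm_is_norm_and_delta_isometry :
    (∀ f : (E →L[ℝ] ℝ) → ℝ, memH0 f → 0 ≤ fblNorm f) ∧
    (∀ f : (E →L[ℝ] ℝ) → ℝ, memH0 f → fblNorm f = 0 → f = 0) ∧
    (∀ f g : (E →L[ℝ] ℝ) → ℝ, memH0 f → memH0 g →
      memH0 (f + g) ∧ fblNorm (f + g) ≤ fblNorm f + fblNorm g) ∧
    (∀ (c : ℝ) (f : (E →L[ℝ] ℝ) → ℝ), memH0 f →
      memH0 (c • f) ∧ fblNorm (c • f) = |c| * fblNorm f) ∧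
    (∀ x : E, memH0 (fun xstar : E →L[ℝ] ℝ => xstar x) ∧
      fblNorm (fun xstar : E →L[ℝ] ℝ => xstar x) = ‖x‖) ∧
    (∀ (a : ℝ) (x y : E),
      (fun xstar : E →L[ℝ] ℝ => xstar (a • x + y)) =
        a • (fun xstar : E →L[ℝ] ℝ => xstar x) + (fun xstar : E →L[ℝ] ℝ => xstar y)) := by
  refine ⟨fun f hf => fblNorm_nonneg' f hf.2, ?_, ?_, ?_, ?_, ?_⟩
  · -- definiteness
    intro f ⟨hpos, hbdd⟩ hnorm
    funext xstar
    have key : ∀ y : E →L[ℝ] ℝ, (∀ x : E, ‖x‖ ≤ 1 → |y x| ≤ 1) → f y = 0 := by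
      intro y hy
      have hmem : |f y| ∈ fblNormSet f := by
        refine ⟨1, fun _ => y, fun x hx => by simpa using hy x hx, by simp⟩
      have := le_fblNorm hbdd hmem
      rw [hnorm] at this
      exact abs_nonpos_iff.mp this
    rcases eq_or_ne xstar 0 with rfl | hx
    · have h2 := hpos 2 (by norm_num) 0
      simp only [smul_zero] at h2
      simpa using (by linarith : f 0 = 0)
    · have hnx : (0:ℝ) < ‖xstar‖ := norm_pos_iff.mpr hx
      have h0 : f (‖xstar‖⁻¹ • xstar) = 0 := by
        apply key
        intro x hxle
        have h1 := (‖xstar‖⁻¹ • xstar).le_opNorm x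
        have h2 : ‖‖xstar‖⁻¹ • xstar‖ ≤ 1 := by
          rw [norm_smul ‖xstar‖⁻¹ xstar, norm_inv, norm_norm]
          exact le_of_eq (inv_mul_cancel₀ hnx.ne')
        calc |(‖xstar‖⁻¹ • xstar) x| = ‖(‖xstar‖⁻¹ • xstar) x‖ :=
              (Real.norm_eq_abs _).symm
          _ ≤ ‖‖xstar‖⁻¹ • xstar‖ * ‖x‖ := h1
          _ ≤ 1 * 1 := mul_le_mul h2 hxle (norm_nonneg x) zero_le_one
          _ = 1 := one_mul 1
      have := hpos ‖xstar‖ hnx (‖xstar‖⁻¹ • xstar)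
      rw [smul_smul, mul_inv_cancel₀ hnx.ne', one_smul, h0, mul_zero] at this
      simpa using this
  · -- triangle
    intro f g ⟨hpf, hbf⟩ ⟨hpg, hbg⟩
    have hbound : ∀ s ∈ fblNormSet (f + g), s ≤ fblNorm f + fblNorm g := by
      rintro s ⟨n, xstar, hx, rfl⟩
      have h1 : (∑ i, |f (xstar i)|) ∈ fblNormSet f := ⟨n, xstar, hx, rfl⟩
      have h2 : (∑ i, |g (xstar i)|) ∈ fblNormSet g := ⟨n, xstar, hx, rfl⟩
      calc ∑ i, |(f + g) (xstar i)| ≤ ∑ i, (|f (xstar i)| + |g (xstar i)|) :=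
            Finset.sum_le_sum fun i _ => abs_add_le _ _
        _ = (∑ i, |f (xstar i)|) + ∑ i, |g (xstar i)| := Finset.sum_add_distrib
        _ ≤ fblNorm f + fblNorm g :=
            add_le_add (le_fblNorm hbf h1) (le_fblNorm hbg h2)
    refine ⟨⟨fun c hc y => by simp [Pi.add_apply, hpf c hc y, hpg c hc y, mul_add],
      ⟨_, hbound⟩⟩, csSup_le (fblNormSet_nonempty _) hbound⟩
  · -- smul
    intro c f ⟨hpf, hbf⟩
    have hsum : ∀ (n : ℕ) (xstar : Fin n → E →L[ℝ] ℝ),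
        ∑ i, |(c • f) (xstar i)| = |c| * ∑ i, |f (xstar i)| := by
      intro n xstar
      rw [Finset.mul_sum]
      exact Finset.sum_congr rfl fun i _ => by
        simp [Pi.smul_apply, smul_eq_mul, abs_mul]
    have hset : fblNormSet (c • f) = |c| • fblNormSet f := by
      ext s
      constructor
      · rintro ⟨n, xstar, hx, rfl⟩
        exact ⟨∑ i, |f (xstar i)|, ⟨n, xstar, hx, rfl⟩, (hsum n xstar).symm⟩
      · rintro ⟨t, ⟨n, xstar, hx, rfl⟩, rfl⟩
        exact ⟨n, xstar, hx, (hsum n xstar).symm⟩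
    have hhom : PositivelyHomogeneous (c • f) := fun d hd y => by
      simp only [Pi.smul_apply, smul_eq_mul, hpf d hd y]; ring
    have hbdd : BddAbove (fblNormSet (c • f)) := by
      refine ⟨|c| * fblNorm f, ?_⟩
      rw [hset]
      rintro s ⟨t, ht, rfl⟩
      simpa using mul_le_mul_of_nonneg_left (le_fblNorm hbf ht) (abs_nonneg c)
    refine ⟨⟨hhom, hbdd⟩, ?_⟩
    rw [fblNorm, hset, Real.sSup_smul_of_nonneg (abs_nonneg c), smul_eq_mul, fblNorm]
  · -- delta isometry
    intro x
    have hbdd : BddAbove (fblNormSet (fun xstar : E →L[ℝ] ℝ => xstar x)) := by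
      refine ⟨‖x‖, ?_⟩
      rintro s ⟨n, xstar, hx, rfl⟩
      exact delta_sum_le xstar hx x
    refine ⟨⟨fun c hc y => by simp, hbdd⟩, le_antisymm ?_ ?_⟩
    · apply csSup_le (fblNormSet_nonempty _)
      rintro s ⟨n, xstar, hx, rfl⟩
      exact delta_sum_le xstar hx x
    · rcases eq_or_ne x 0 with rfl | hx
      · simpa using fblNorm_nonneg' _ hbdd
      · obtain ⟨g, hg1, hgx⟩ := exists_dual_vector ℝ x (norm_ne_zero_iff.mpr hx)
        have hmem : ‖x‖ ∈ fblNormSet (fun xstar : E →L[ℝ] ℝ => xstar x) := by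
          refine ⟨1, fun _ => g, fun z hz => ?_, ?_⟩
          · have := g.le_opNorm z
            simp only [Fin.sum_univ_one]
            calc |g z| ≤ ‖g‖ * ‖z‖ := by simpa [Real.norm_eq_abs] using this
              _ ≤ 1 * 1 := mul_le_mul (le_of_eq hg1) hz (norm_nonneg z) zero_le_one
              _ = 1 := one_mul 1
          · simp [hgx, abs_of_nonneg (norm_nonneg x)]
        exact le_csSup hbdd hmem
  · intro a x y
    funext xstar
    simp
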